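/- M_P² = [[3,4],[-4,3]] is 5 times a rotation matrix, and the angle of the rotation M_P/√5 is -φ where φ = arctan(1/2); consequently applying the pinwheel inflation n times rotates directions by -nφ, and these rotations are pairwise distinct for distinct n. -/

import Mathlib

/-- The pinwheel expansion matrix. -/
noncomputable def Mp : Matrix (Fin 2) (Fin 2) ℝ := !![2, 1; -1, 2]

/-- The rotation matrix by angle `θ`. -/
noncomputable def rotMat (θ : ℝ) : Matrix (Fin 2) (Fin 2) ℝ :=
  !![Real.cos θ, -Real.sin θ; Real.sin θ, Real.cos θ]

lemma hsqrt : Real.sqrt (1 + (1/2:ℝ)^2) = Real.sqrt 5 / 2 := by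
  rw [show (1 + (1/2:ℝ)^2) = 5/4 by norm_num, Real.sqrt_div (by norm_num : (0:ℝ) ≤ 5),
    show Real.sqrt 4 = 2 by rw [show (4:ℝ) = 2^2 by norm_num, Real.sqrt_sq (by norm_num)]]

lemma part1 : Mp = Real.sqrt 5 • rotMat (-(Real.arctan (1 / 2))) := by
  have h5 : (0:ℝ) < Real.sqrt 5 := Real.sqrt_pos.2 (by norm_num)
  have hsq : Real.sqrt 5 * Real.sqrt 5 = 5 := Real.mul_self_sqrt (by norm_num)
  have h54 : Real.sqrt (5/4) = Real.sqrt 5 / 2 := by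
    rw [← hsqrt]; norm_num
  ext i j
  fin_cases i <;> fin_cases j <;>
    simp [Mp, rotMat, Real.cos_arctan, Real.sin_arctan, hsqrt, h54] <;>
    field_simp <;>
    rw [show ((2:ℝ)^2+1) = 5 by norm_num] <;> ring_nf <;> rw [h54] <;> ring

lemma part2 : Mp ^ 2 = !![3, 4; -4, 3] := by
  rw [pow_two]
  ext i j
  fin_cases i <;> fin_cases j <;>
    simp [Mp, Matrix.mul_apply, Fin.sum_univ_two] <;> norm_num

lemma rot_mul (a b : ℝ) : rotMat a * rotMat b = rotMat (a + b) := by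
  ext i j
  fin_cases i <;> fin_cases j <;>
    simp [rotMat, Matrix.mul_apply, Fin.sum_univ_two, Real.cos_add, Real.sin_add] <;> ring

lemma part3 : Mp ^ 2 = (5 : ℝ) • rotMat (-(2 * Real.arctan (1 / 2))) := by
  rw [part1, smul_pow, Real.sq_sqrt (by norm_num : (0:ℝ) ≤ 5), pow_two, rot_mul]
  norm_num
  ring_nf

-- integer version
def Nz : Matrix (Fin 2) (Fin 2) ℤ := !![2, 1; -1, 2]

lemma Mp_eq : Mp = (Int.castRingHom ℝ).mapMatrix Nz := by
  ext i j
  fin_cases i <;> fin_cases j <;> simp [Mp, Nz]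

noncomputable def Am : Matrix (Fin 2) (Fin 2) (ZMod 5) := (Int.castRingHom (ZMod 5)).mapMatrix Nz

lemma Am_eq : Am = !![2, 1; -1, 2] := by
  ext i j
  fin_cases i <;> fin_cases j <;> simp [Am, Nz]

lemma Am_cube : Am ^ 3 = Am := by
  rw [Am_eq, pow_succ, pow_two]
  ext i j
  fin_cases i <;> fin_cases j <;>
    simp [Matrix.mul_apply, Fin.sum_univ_two] <;> decide

lemma Am_pow (k : ℕ) : Am ^ (k + 1) = Am ∨ Am ^ (k + 1) = Am ^ 2 := by
  induction k with
  | zero => left; rw [pow_one]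
  | succ n ih =>
    rcases ih with h | h
    · right; rw [pow_succ, h, pow_two]
    · left; rw [pow_succ, h, ← pow_succ, Am_cube]

lemma Am_pow_ne (k : ℕ) : (Am ^ (k + 1)) 0 1 ≠ 0 := by
  rcases Am_pow k with h | h <;> rw [h]
  · rw [Am_eq]; decide
  · rw [pow_two, Am_eq]
    simp [Matrix.mul_apply, Fin.sum_univ_two]
    decide

lemma rot_zero : rotMat 0 = 1 := by
  ext i j
  fin_cases i <;> fin_cases j <;> simp [rotMat, Matrix.one_apply]

lemma key (k : ℕ) : rotMat (-(Real.arctan (1 / 2))) ^ (k + 1) ≠ 1 := by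
  intro h
  have hM : Mp ^ (k + 1) = (Real.sqrt 5) ^ (k + 1) • (1 : Matrix (Fin 2) (Fin 2) ℝ) := by
    rw [part1, smul_pow, h]
  have e1 : (Mp ^ (k + 1)) 0 1 = 0 := by
    rw [hM, Matrix.smul_apply, Matrix.one_apply_ne (by decide)]
    simp
  have e2 : (Mp ^ (k + 1)) 0 1 = (((Nz ^ (k + 1)) 0 1 : ℤ) : ℝ) := by
    rw [Mp_eq, ← map_pow, RingHom.mapMatrix_apply, Matrix.map_apply]
    simp
  have e3 : (Nz ^ (k + 1)) 0 1 = 0 := by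
    have := e2.symm.trans e1
    exact_mod_cast this
  have e4 : (Am ^ (k + 1)) 0 1 = 0 := by
    rw [Am, ← map_pow, RingHom.mapMatrix_apply, Matrix.map_apply, e3]
    simp
  exact Am_pow_ne k e4

lemma aux : ∀ {n m : ℕ}, n ≤ m →
    rotMat (-(Real.arctan (1 / 2))) ^ n = rotMat (-(Real.arctan (1 / 2))) ^ m → n = m := by
  intro n m hle h
  set R := rotMat (-(Real.arctan (1 / 2)))
  have hu1 : R * rotMat (Real.arctan (1 / 2)) = 1 := by
    rw [rot_mul]; simp [rot_zero]
  have hu2 : rotMat (Real.arctan (1 / 2)) * R = 1 := by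
    rw [rot_mul]; simp [rot_zero]
  set U : (Matrix (Fin 2) (Fin 2) ℝ)ˣ := ⟨R, rotMat (Real.arctan (1 / 2)), hu1, hu2⟩
  have hU : U ^ n = U ^ m :=
    Units.ext (by simpa [Units.val_pow_eq_pow_val] using h)
  have hsub : U ^ (m - n) = 1 := by
    have : U ^ n * U ^ (m - n) = U ^ n * 1 := by
      rw [← pow_add, Nat.add_sub_cancel' hle, hU, mul_one]
    exact mul_left_cancel this
  by_contra hne
  have hk : ∃ k, m - n = k + 1 := ⟨m - n - 1, by omega⟩
  obtain ⟨k, hk⟩ := hk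
  apply key k
  show R ^ (k + 1) = 1
  have : ((U ^ (k + 1) : (Matrix (Fin 2) (Fin 2) ℝ)ˣ) : Matrix (Fin 2) (Fin 2) ℝ) = 1 := by
    rw [← hk, hsub]; rfl
  rw [Units.val_pow_eq_pow_val] at this
  exact this

/-- `M_P = √5 · Rot(-φ)` with `φ = arctan(1/2)`, so
`M_P² = [[3,4],[-4,3]] = 5 · Rot(-2φ)` is 5 times a rotation matrix; applying
the inflation `n` times rotates directions by `-nφ`, and these rotations are
pairwise distinct for distinct `n`. -/
theorem pinwheel_matrix_rotation :
    Mp = Real.sqrt 5 • rotMat (-(Real.arctan (1 / 2))) ∧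
    Mp ^ 2 = !![3, 4; -4, 3] ∧
    Mp ^ 2 = (5 : ℝ) • rotMat (-(2 * Real.arctan (1 / 2))) ∧
    Function.Injective (fun n : ℕ => rotMat (-(Real.arctan (1 / 2))) ^ n) := by
  refine ⟨part1, part2, part3, ?_⟩
  intro n m h
  simp only at h
  rcases le_total n m with hle | hle
  · exact aux hle h
  · exact (aux hle h.symm).symm
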